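/- Let (a_k)_{k≥0} be a sequence of nonnegative reals and let g(z) = Σ_{k≥0} a_k z^k with radius of convergence R. Suppose u, v : ℝ → ℝ are measurable with ‖u‖_∞ ≤ B, ‖v‖_∞ ≤ B, u - v ∈ L²(ℝ), and B < R. Then Σ_{k≥0} a_k (u^k - v^k) defines an L² function and ‖Σ_{k≥0} a_k (u^k - v^k)‖_2 ≤ g'(B) ‖u - v‖_2. -/

import Mathlib

open MeasureTheory Real

/-- Key algebraic estimate: `|u^k - v^k| ≤ k B^(k-1) |u - v|` when `|u|, |v| ≤ B`. -/
lemma abs_pow_sub_pow_le_aux {u v B : ℝ} (hu : |u| ≤ B) (hv : |v| ≤ B) (k : ℕ) :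
    |u ^ k - v ^ k| ≤ (k : ℝ) * B ^ (k - 1) * |u - v| := by
  have hB : 0 ≤ B := (abs_nonneg u).trans hu
  rw [← geom_sum₂_mul u v k, abs_mul]
  gcongr
  calc |∑ i ∈ Finset.range k, u ^ i * v ^ (k - 1 - i)|
      ≤ ∑ i ∈ Finset.range k, |u ^ i * v ^ (k - 1 - i)| := Finset.abs_sum_le_sum_abs _ _
    _ ≤ ∑ i ∈ Finset.range k, B ^ (k - 1) := by
        apply Finset.sum_le_sum
        intro i hi
        rw [abs_mul, abs_pow, abs_pow]
        have hik : i + (k - 1 - i) = k - 1 := by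
          have : i < k := Finset.mem_range.mp hi
          omega
        calc |u| ^ i * |v| ^ (k - 1 - i) ≤ B ^ i * B ^ (k - 1 - i) := by
              gcongr
          _ = B ^ (k - 1) := by rw [← pow_add, hik]
    _ = (k : ℝ) * B ^ (k - 1) := by
        rw [Finset.sum_const, Finset.card_range, nsmul_eq_mul]

/-- Lipschitz estimate in `L²` for the power-series nonlinearity: if `a_k ≥ 0`,
`g(z) = Σ a_k z^k` has radius of convergence `> B`, `|u| ≤ B`, `|v| ≤ B`, and
`u - v ∈ L²`, then `Σ a_k (u^k - v^k) ∈ L²` with norm at most `g'(B) ‖u - v‖₂`,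
where `g'(B) = Σ_k k a_k B^(k-1)`. -/
theorem powerSeries_nonlinearity_L2_lipschitz
    (a : ℕ → ℝ) (ha : ∀ k, 0 ≤ a k) (B : ℝ) (hB : 0 ≤ B)
    (hR : ENNReal.ofReal B < (FormalMultilinearSeries.ofScalars ℝ a).radius)
    (u v : ℝ → ℝ) (hu : Measurable u) (hv : Measurable v)
    (hub : ∀ x, |u x| ≤ B) (hvb : ∀ x, |v x| ≤ B)
    (huv : MemLp (fun x => u x - v x) 2) :
    MemLp (fun x => ∑' k, a k * ((u x) ^ k - (v x) ^ k)) 2 ∧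
      eLpNorm (fun x => ∑' k, a k * ((u x) ^ k - (v x) ^ k)) 2 volume ≤
        ENNReal.ofReal (∑' k : ℕ, (k : ℝ) * a k * B ^ (k - 1)) *
          eLpNorm (fun x => u x - v x) 2 volume := by
  set C : ℝ := ∑' k : ℕ, (k : ℝ) * a k * B ^ (k - 1) with hCdef
  -- choose r with B < r < radius
  obtain ⟨r, hBr, hrR⟩ := ENNReal.lt_iff_exists_nnreal_btwn.mp hR
  have hrne : r ≠ 0 := by rintro rfl; simp at hBr
  have hr0 : (0 : ℝ) < r := by exact_mod_cast pos_iff_ne_zero.mpr hrne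
  have hBr' : B < (r : ℝ) := by
    rw [← ENNReal.ofReal_coe_nnreal] at hBr
    exact (ENNReal.ofReal_lt_ofReal_iff_of_nonneg hB).mp hBr
  -- summability of a k * r^k
  have hsum_r : Summable (fun k : ℕ => a k * (r : ℝ) ^ k) := by
    have h := (FormalMultilinearSeries.ofScalars ℝ a).summable_norm_mul_pow hrR
    simp only [FormalMultilinearSeries.ofScalars_norm, Real.norm_eq_abs] at h
    simpa [abs_of_nonneg (ha _)] using h
  -- summability of derivative series at B
  set t : ℝ := B / r with htdef
  have ht0 : 0 ≤ t := div_nonneg hB hr0.le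
  have ht1 : t < 1 := (div_lt_one hr0).mpr hBr'
  have hgeo : Summable (fun j : ℕ => ((j : ℝ) + 1) * t ^ j) := by
    have h1 : Summable (fun j : ℕ => (j : ℝ) * t ^ j) := by
      simpa using summable_pow_mul_geometric_of_norm_lt_one (R := ℝ) 1
        (by rwa [Real.norm_eq_abs, abs_of_nonneg ht0])
    have h2 : Summable (fun j : ℕ => t ^ j) :=
      summable_geometric_of_lt_one ht0 ht1
    simpa [add_mul] using h1.add h2
  set M : ℝ := ∑' j : ℕ, ((j : ℝ) + 1) * t ^ j with hMdef
  have hM0 : 0 ≤ M := tsum_nonneg fun j => by positivity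
  have hkt : ∀ k : ℕ, (k : ℝ) * t ^ (k - 1) ≤ M := by
    intro k
    cases k with
    | zero => simpa using hM0
    | succ n =>
      have := Summable.le_tsum hgeo n (fun j _ => by positivity)
      simpa using this
  have hterm_le : ∀ k : ℕ, (k : ℝ) * a k * B ^ (k - 1) ≤ (M / r) * (a k * (r : ℝ) ^ k) := by
    intro k
    have hBt : B = t * r := by rw [htdef, div_mul_cancel₀ B hr0.ne']
    have hak := ha k
    cases k with
    | zero =>
      have h0 := ha 0
      simp only [Nat.cast_zero, zero_mul]
      positivity
    | succ n =>
      have han := ha (n + 1)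
      have hpow : B ^ (n + 1 - 1) = t ^ n * (r : ℝ) ^ n := by
        rw [Nat.add_sub_cancel, hBt, mul_pow]
      calc ((n + 1 : ℕ) : ℝ) * a (n + 1) * B ^ (n + 1 - 1)
          = (((n + 1 : ℕ) : ℝ) * t ^ n) * (a (n + 1) * (r : ℝ) ^ n) := by
            rw [hpow]; ring
        _ ≤ M * (a (n + 1) * (r : ℝ) ^ n) :=
            mul_le_mul_of_nonneg_right (by simpa using hkt (n + 1)) (by positivity)
        _ = (M / r) * (a (n + 1) * (r : ℝ) ^ (n + 1)) := by
            field_simp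
            ring
  have hsum : Summable (fun k : ℕ => (k : ℝ) * a k * B ^ (k - 1)) := by
    refine Summable.of_nonneg_of_le (fun k => by have := ha k; positivity) hterm_le ?_
    exact (hsum_r.mul_left _)
  have hC0 : 0 ≤ C := tsum_nonneg fun k => by have := ha k; positivity
  -- pointwise summability and bound
  have hptsum : ∀ x, Summable (fun k : ℕ => a k * ((u x) ^ k - (v x) ^ k)) := by
    intro x
    apply Summable.of_norm
    refine Summable.of_nonneg_of_le (fun k => norm_nonneg _) (fun k => ?_)
      (hsum.mul_right |u x - v x|)
    rw [Real.norm_eq_abs, abs_mul, abs_of_nonneg (ha k)]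
    calc a k * |(u x) ^ k - (v x) ^ k|
        ≤ a k * ((k : ℝ) * B ^ (k - 1) * |u x - v x|) :=
          mul_le_mul_of_nonneg_left (abs_pow_sub_pow_le_aux (hub x) (hvb x) k) (ha k)
      _ = (k : ℝ) * a k * B ^ (k - 1) * |u x - v x| := by ring
  have key : ∀ x, ‖∑' k, a k * ((u x) ^ k - (v x) ^ k)‖ ≤ C * ‖u x - v x‖ := by
    intro x
    rw [Real.norm_eq_abs, Real.norm_eq_abs]
    calc |∑' k : ℕ, a k * ((u x) ^ k - (v x) ^ k)|
        ≤ ∑' k : ℕ, |a k * ((u x) ^ k - (v x) ^ k)| := by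
          have h := norm_tsum_le_tsum_norm (f := fun k : ℕ => a k * ((u x) ^ k - (v x) ^ k))
              (by simp only [Real.norm_eq_abs]; exact (hptsum x).abs)
          simpa only [Real.norm_eq_abs] using h
      _ ≤ ∑' k : ℕ, (k : ℝ) * a k * B ^ (k - 1) * |u x - v x| := by
          refine Summable.tsum_le_tsum (fun k => ?_) ((hptsum x).abs) (hsum.mul_right _)
          rw [abs_mul, abs_of_nonneg (ha k)]
          calc a k * |(u x) ^ k - (v x) ^ k|
              ≤ a k * ((k : ℝ) * B ^ (k - 1) * |u x - v x|) :=
                mul_le_mul_of_nonneg_left (abs_pow_sub_pow_le_aux (hub x) (hvb x) k) (ha k)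
            _ = (k : ℝ) * a k * B ^ (k - 1) * |u x - v x| := by ring
      _ = C * |u x - v x| := by rw [tsum_mul_right]
  -- measurability
  have hmeas : Measurable (fun x => ∑' k, a k * ((u x) ^ k - (v x) ^ k)) := by
    apply measurable_of_tendsto_metrizable
      (f := fun n x => ∑ k ∈ Finset.range n, a k * ((u x) ^ k - (v x) ^ k))
    · intro n
      apply Finset.measurable_sum
      intro k _
      exact (measurable_const.mul ((hu.pow_const k).sub (hv.pow_const k)))
    · rw [tendsto_pi_nhds]
      intro x
      exact (hptsum x).hasSum.tendsto_sum_nat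
  refine ⟨huv.of_le_mul hmeas.aestronglyMeasurable (Filter.Eventually.of_forall key), ?_⟩
  exact eLpNorm_le_mul_eLpNorm_of_ae_le_mul (Filter.Eventually.of_forall key) 2
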